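/- Let B be a weakly closed class of CDFs on [0,1] each satisfying H̄(1-y) = o(y) as y → 0. Then the map (π, H) ↦ F_{π,H}, where F_{π,H}(x) = πx + (1-π)H(x), is a homeomorphism from (0,1) × B (product of Euclidean and weak topologies) onto its image F_B with the weak topology. -/

import Mathlib

open Set Filter

/-- A cumulative distribution function of a probability measure on [0,1]. -/
def IsCDF01 (H : ℝ → ℝ) : Prop :=
  Monotone H ∧ (∀ x, x < 0 → H x = 0) ∧ (∀ x, 1 ≤ x → H x = 1) ∧
    ∀ x, ContinuousWithinAt H (Ici x) x

/-- CDF of the uniform distribution on [0,1]. -/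
noncomputable def unifCDF (x : ℝ) : ℝ := max 0 (min x 1)

/-- The mixture `π · Uniform + (1-π) · H`. -/
noncomputable def mix (p : ℝ) (H : ℝ → ℝ) (x : ℝ) : ℝ :=
  p * unifCDF x + (1 - p) * H x

/-- Weak convergence of CDFs: pointwise convergence at continuity points of the limit. -/
def WeakConv (Fn : ℕ → ℝ → ℝ) (F : ℝ → ℝ) : Prop :=
  ∀ x, ContinuousAt F x → Tendsto (fun n => Fn n x) atTop (nhds (F x))

/-- `π(F) = inf { (1 - F(λ))/(1-λ) : 0 < λ < 1 }`. -/
noncomputable def piF (F : ℝ → ℝ) : ℝ :=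
  ⨅ l : Ioo (0:ℝ) 1, (1 - F l) / (1 - l)

lemma unifCDF_eq {x : ℝ} (h0 : 0 ≤ x) (h1 : x ≤ 1) : unifCDF x = x := by
  simp [unifCDF, min_eq_left h1, max_eq_right h0]

lemma unifCDF_neg {x : ℝ} (h : x < 0) : unifCDF x = 0 := by
  simp [unifCDF, min_eq_left (le_of_lt (lt_of_lt_of_le h zero_le_one)), max_eq_left (le_of_lt h)]

lemma unifCDF_ge {x : ℝ} (h : 1 ≤ x) : unifCDF x = 1 := by
  simp [unifCDF, min_eq_right h]

lemma unifCDF_mono : Monotone unifCDF :=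
  fun _ _ h => max_le_max le_rfl (min_le_min h le_rfl)

lemma unifCDF_continuous : Continuous unifCDF :=
  continuous_const.max (continuous_id.min continuous_const)

lemma cdf_nonneg {H : ℝ → ℝ} (h : IsCDF01 H) (x : ℝ) : 0 ≤ H x := by
  rcases lt_or_ge x 0 with h' | h'
  · rw [h.2.1 x h']
  · calc (0:ℝ) = H (-1) := (h.2.1 (-1) (by norm_num)).symm
      _ ≤ H x := h.1 (by linarith)

lemma cdf_le_one {H : ℝ → ℝ} (h : IsCDF01 H) (x : ℝ) : H x ≤ 1 := by
  calc H x ≤ H (max x 1) := h.1 (le_max_left _ _)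
    _ = 1 := h.2.2.1 _ (le_max_right _ _)

lemma isCDF01_mix {p : ℝ} (hp0 : 0 ≤ p) (hp1 : p ≤ 1) {H : ℝ → ℝ} (hH : IsCDF01 H) :
    IsCDF01 (mix p H) := by
  refine ⟨fun a b hab => ?_, fun x hx => ?_, fun x hx => ?_, fun x => ?_⟩
  · have := unifCDF_mono hab
    have := hH.1 hab
    unfold mix; nlinarith
  · simp [mix, unifCDF_neg hx, hH.2.1 x hx]
  · simp only [mix, unifCDF_ge hx, hH.2.2.1 x hx, mul_one]; ring
  · exact ((continuous_const.mul unifCDF_continuous).continuousWithinAt).add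
      (continuousWithinAt_const.mul (hH.2.2.2 x))

lemma mix_tail {p : ℝ} {H : ℝ → ℝ}
    (hH : Tendsto (fun y => (1 - H (1 - y)) / y) (nhdsWithin 0 (Ioi (0:ℝ))) (nhds 0)) :
    Tendsto (fun y => (1 - mix p H (1 - y)) / y) (nhdsWithin 0 (Ioi (0:ℝ))) (nhds p) := by
  have h1 : Tendsto (fun y : ℝ => p + (1 - p) * ((1 - H (1 - y)) / y))
      (nhdsWithin 0 (Ioi (0:ℝ))) (nhds (p + (1 - p) * 0)) :=
    tendsto_const_nhds.add (tendsto_const_nhds.mul hH)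
  rw [mul_zero, add_zero] at h1
  refine h1.congr' ?_
  filter_upwards [Ioo_mem_nhdsGT_of_mem (show (0:ℝ) ∈ Ico (0:ℝ) 1 by constructor <;> norm_num)]
    with y hy
  have hu : unifCDF (1 - y) = 1 - y := unifCDF_eq (by linarith [hy.2]) (by linarith [hy.1])
  have hy0 : y ≠ 0 := ne_of_gt hy.1
  field_simp [mix, hu]
  simp only [mix, hu]
  ring

lemma continuousAt_mix_iff {p : ℝ} (hp : p ≠ 1) {H : ℝ → ℝ} {x : ℝ} :
    ContinuousAt (mix p H) x ↔ ContinuousAt H x := by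
  constructor
  · intro h
    have : H = fun y => (mix p H y - p * unifCDF y) * (1 - p)⁻¹ := by
      funext y
      have : (1:ℝ) - p ≠ 0 := sub_ne_zero.mpr (Ne.symm hp)
      field_simp [mix]
      simp only [mix]; ring
    rw [this]
    exact (h.sub ((continuous_const.mul unifCDF_continuous).continuousAt)).mul continuousAt_const
  · intro h
    exact ((continuous_const.mul unifCDF_continuous).continuousAt).add (continuousAt_const.mul h)

lemma tail_identify {p p' : ℝ} {H H' : ℝ → ℝ}
    (hH : Tendsto (fun y => (1 - H (1 - y)) / y) (nhdsWithin 0 (Ioi (0:ℝ))) (nhds 0))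
    (hH' : Tendsto (fun y => (1 - H' (1 - y)) / y) (nhdsWithin 0 (Ioi (0:ℝ))) (nhds 0))
    (heq : ∀ x, mix p H x = mix p' H' x) : p = p' := by
  have h1 := mix_tail (p := p) hH
  have h2 := mix_tail (p := p') hH'
  have he : (fun y : ℝ => (1 - mix p H (1 - y)) / y) = fun y => (1 - mix p' H' (1 - y)) / y := by
    funext y; rw [heq]
  rw [he] at h1
  exact tendsto_nhds_unique h1 h2

lemma dense_continuity {F : ℝ → ℝ} (hF : Monotone F) : Dense {x | ContinuousAt F x} := by
  have h := (hF.countable_not_continuousAt).dense_compl ℝ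
  simpa [compl_setOf] using h

lemma mono_ineq_ext {F : ℝ → ℝ} {q : ℝ}
    (hFr : ∀ x, ContinuousWithinAt F (Ici x) x)
    (hD : Dense {x | ContinuousAt F x})
    (h : ∀ a, ContinuousAt F a → ∀ b, ContinuousAt F b → b ≤ a →
      q * (unifCDF a - unifCDF b) ≤ F a - F b) :
    ∀ a b, b ≤ a → q * (unifCDF a - unifCDF b) ≤ F a - F b := by
  intro a b hba
  rcases eq_or_lt_of_le hba with rfl | hlt
  · simp
  have hseq : Tendsto (fun j : ℕ => 1 / ((j:ℝ) + 1)) atTop (nhds 0) :=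
    tendsto_one_div_add_atTop_nhds_zero_nat
  have hA : ∀ j : ℕ, ∃ c, ContinuousAt F c ∧ c ∈ Ioo a (a + 1 / ((j:ℝ) + 1)) := by
    intro j
    obtain ⟨c, hc1, hc2⟩ := hD.exists_between (show a < a + 1 / ((j:ℝ) + 1) by nlinarith [show (0:ℝ) < 1/((j:ℝ)+1) by positivity])
    exact ⟨c, hc1, hc2⟩
  choose A hAc hAm using hA
  have hB : ∀ j : ℕ, ∃ c, ContinuousAt F c ∧ c ∈ Ioo b (min (b + 1 / ((j:ℝ) + 1)) a) := by
    intro j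
    have : b < min (b + 1 / ((j:ℝ) + 1)) a := lt_min (by nlinarith [show (0:ℝ) < 1/((j:ℝ)+1) by positivity]) hlt
    obtain ⟨c, hc1, hc2⟩ := hD.exists_between this
    exact ⟨c, hc1, hc2⟩
  choose Bs hBc hBm using hB
  have hAt : Tendsto A atTop (nhds a) := by
    have hup : Tendsto (fun j : ℕ => a + 1 / ((j:ℝ) + 1)) atTop (nhds a) := by
      simpa using tendsto_const_nhds.add hseq
    exact tendsto_of_tendsto_of_tendsto_of_le_of_le tendsto_const_nhds hup
      (fun j => (hAm j).1.le) (fun j => (hAm j).2.le)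
  have hBt : Tendsto Bs atTop (nhds b) := by
    have hup : Tendsto (fun j : ℕ => b + 1 / ((j:ℝ) + 1)) atTop (nhds b) := by
      simpa using tendsto_const_nhds.add hseq
    exact tendsto_of_tendsto_of_tendsto_of_le_of_le tendsto_const_nhds hup
      (fun j => (hBm j).1.le) (fun j => ((hBm j).2.trans_le (min_le_left _ _)).le)
  have hFA : Tendsto (fun j => F (A j)) atTop (nhds (F a)) :=
    (hFr a).tendsto.comp (tendsto_nhdsWithin_iff.mpr
      ⟨hAt, Eventually.of_forall fun j => (hAm j).1.le⟩)
  have hFB : Tendsto (fun j => F (Bs j)) atTop (nhds (F b)) :=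
    (hFr b).tendsto.comp (tendsto_nhdsWithin_iff.mpr
      ⟨hBt, Eventually.of_forall fun j => (hBm j).1.le⟩)
  have huA : Tendsto (fun j => unifCDF (A j)) atTop (nhds (unifCDF a)) :=
    (unifCDF_continuous.continuousAt).tendsto.comp hAt
  have huB : Tendsto (fun j => unifCDF (Bs j)) atTop (nhds (unifCDF b)) :=
    (unifCDF_continuous.continuousAt).tendsto.comp hBt
  refine le_of_tendsto_of_tendsto' (tendsto_const_nhds.mul (huA.sub huB)) (hFA.sub hFB) ?_
  intro j
  exact h (A j) (hAc j) (Bs j) (hBc j)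
    (((hBm j).2.trans_le (min_le_right _ _)).trans (hAm j).1).le

lemma subseq_limit_eq (B : Set (ℝ → ℝ))
    (hBcdf : ∀ H ∈ B, IsCDF01 H)
    (hBtail : ∀ H ∈ B,
      Tendsto (fun y => (1 - H (1 - y)) / y) (nhdsWithin 0 (Ioi (0:ℝ))) (nhds 0))
    (hBclosed : ∀ (Hn : ℕ → ℝ → ℝ) (H : ℝ → ℝ), (∀ n, Hn n ∈ B) →
      IsCDF01 H → WeakConv Hn H → H ∈ B)
    (pn : ℕ → ℝ) (Hn : ℕ → ℝ → ℝ) (hpn : ∀ n, pn n ∈ Ioo (0:ℝ) 1) (hHn : ∀ n, Hn n ∈ B)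
    {p : ℝ} (hp : p ∈ Ioo (0:ℝ) 1) {H : ℝ → ℝ} (hH : H ∈ B)
    (hW : WeakConv (fun n => mix (pn n) (Hn n)) (mix p H))
    (φ : ℕ → ℕ) (hφ : Tendsto φ atTop atTop) {q : ℝ}
    (hq : Tendsto (fun j => pn (φ j)) atTop (nhds q)) : q = p := by
  have hHcdf : IsCDF01 H := hBcdf H hH
  set F : ℝ → ℝ := mix p H with hFdef
  have hFcdf : IsCDF01 F := isCDF01_mix hp.1.le hp.2.le hHcdf
  have hD : Dense {x | ContinuousAt F x} := dense_continuity hFcdf.1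
  have hq0 : 0 ≤ q := ge_of_tendsto hq (Eventually.of_forall fun j => (hpn _).1.le)
  -- q < 1
  have hq1 : q < 1 := by
    have hhalf : (0:ℝ) < (1 - p) / 2 := by have := hp.2; linarith
    have hmem : (fun y : ℝ => (1 - H (1 - y)) / y) ⁻¹' Iio ((1 - p) / 2) ∈
        nhdsWithin 0 (Ioi (0:ℝ)) := hBtail H hH (Iio_mem_nhds hhalf)
    obtain ⟨ε, hε, hsub⟩ := mem_nhdsGT_iff_exists_Ioo_subset.mp hmem
    obtain ⟨x, hxD, hxI⟩ := hD.exists_between (show max (1 - ε) 0 < 1 by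
      simp only [max_lt_iff]; exact ⟨by simpa using hε, one_pos⟩)
    have hx0 : 0 < x := lt_of_le_of_lt (le_max_right _ _) hxI.1
    have hx1 : x < 1 := hxI.2
    have hyI : (1 - x) ∈ Ioo (0:ℝ) ε :=
      ⟨by linarith, by have := lt_of_le_of_lt (le_max_left _ _) hxI.1; linarith⟩
    have hr : (1 - H (1 - (1 - x))) / (1 - x) < (1 - p) / 2 := hsub hyI
    rw [show (1:ℝ) - (1 - x) = x by ring] at hr
    have hux : unifCDF x = x := unifCDF_eq hx0.le hx1.le
    have hbound : ∀ n, pn n * (1 - x) ≤ 1 - mix (pn n) (Hn n) x := by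
      intro n
      have h1 : Hn n x ≤ 1 := cdf_le_one (hBcdf _ (hHn n)) x
      have h2 := (hpn n).1
      have h3 := (hpn n).2
      simp only [mix, hux]
      nlinarith
    have hlim : Tendsto (fun j => mix (pn (φ j)) (Hn (φ j)) x) atTop (nhds (F x)) :=
      (hW x hxD).comp hφ
    have hkey : q * (1 - x) ≤ 1 - F x :=
      le_of_tendsto_of_tendsto' (hq.mul tendsto_const_nhds)
        (tendsto_const_nhds.sub hlim) (fun j => hbound (φ j))
    have hFx : F x = p * x + (1 - p) * H x := by simp [hFdef, mix, hux]
    have hHx1 : 1 - H x < (1 - p) / 2 * (1 - x) := by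
      rw [div_lt_iff₀ (by linarith : (0:ℝ) < 1 - x)] at hr
      linarith
    have hp2 := hp.2
    have hp1 := hp.1
    nlinarith [hHx1, hkey, hFx, sub_nonneg.mpr (cdf_le_one hHcdf x)]
  have h1q : (0:ℝ) < 1 - q := by linarith
  set G : ℝ → ℝ := fun x => (F x - q * unifCDF x) / (1 - q) with hGdef
  -- pairwise inequality at continuity points
  have hpair : ∀ a, ContinuousAt F a → ∀ b, ContinuousAt F b → b ≤ a →
      q * (unifCDF a - unifCDF b) ≤ F a - F b := by
    intro a ha b hb hba
    have hstep : ∀ j, pn (φ j) * (unifCDF a - unifCDF b) ≤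
        mix (pn (φ j)) (Hn (φ j)) a - mix (pn (φ j)) (Hn (φ j)) b := by
      intro j
      have hu := unifCDF_mono hba
      have hh := (hBcdf _ (hHn (φ j))).1 hba
      have h2 := (hpn (φ j)).2
      simp only [mix]
      nlinarith
    exact le_of_tendsto_of_tendsto' (hq.mul tendsto_const_nhds)
      (((hW a ha).comp hφ).sub ((hW b hb).comp hφ)) hstep
  have hineq : ∀ a b, b ≤ a → q * (unifCDF a - unifCDF b) ≤ F a - F b :=
    mono_ineq_ext hFcdf.2.2.2 hD hpair
  have hGcdf : IsCDF01 G := by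
    refine ⟨fun b a hba => ?_, fun x hx => ?_, fun x hx => ?_, fun x => ?_⟩
    · exact (div_le_div_iff_of_pos_right h1q).mpr (by linarith [hineq a b hba])
    · simp [hGdef, hFcdf.2.1 x hx, unifCDF_neg hx]
    · rw [hGdef]
      simp only [hFcdf.2.2.1 x hx, unifCDF_ge hx]
      field_simp
    · exact ((hFcdf.2.2.2 x).sub
        ((continuous_const.mul unifCDF_continuous).continuousWithinAt)).div_const _
  have hFG : F = fun y => (1 - q) * G y + q * unifCDF y := by
    funext y
    rw [hGdef]
    field_simp
    ring
  have hWG : WeakConv (fun j => Hn (φ j)) G := by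
    intro x hxG
    have hxF : ContinuousAt F x := by
      rw [hFG]
      exact (continuousAt_const.mul hxG).add
        (continuousAt_const.mul unifCDF_continuous.continuousAt)
    have hrepr : ∀ j, Hn (φ j) x =
        (mix (pn (φ j)) (Hn (φ j)) x - pn (φ j) * unifCDF x) / (1 - pn (φ j)) := by
      intro j
      have : (1:ℝ) - pn (φ j) ≠ 0 := by have := (hpn (φ j)).2; intro h; linarith
      field_simp [mix]
      simp only [mix]; ring
    have hlim : Tendsto
        (fun j => (mix (pn (φ j)) (Hn (φ j)) x - pn (φ j) * unifCDF x) / (1 - pn (φ j)))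
        atTop (nhds ((F x - q * unifCDF x) / (1 - q))) :=
      (((hW x hxF).comp hφ).sub (hq.mul tendsto_const_nhds)).div
        (tendsto_const_nhds.sub hq) (ne_of_gt h1q)
    exact hlim.congr (fun j => (hrepr j).symm)
  have hGB : G ∈ B := hBclosed _ G (fun j => hHn _) hGcdf hWG
  -- tail of G
  have htailG : Tendsto (fun y => (1 - G (1 - y)) / y) (nhdsWithin 0 (Ioi (0:ℝ)))
      (nhds ((p - q) * (1 - q)⁻¹)) := by
    have hbase : Tendsto (fun y => ((1 - F (1 - y)) / y - q) * (1 - q)⁻¹)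
        (nhdsWithin 0 (Ioi (0:ℝ))) (nhds ((p - q) * (1 - q)⁻¹)) :=
      ((mix_tail (hBtail H hH)).sub tendsto_const_nhds).mul tendsto_const_nhds
    refine hbase.congr' ?_
    filter_upwards [Ioo_mem_nhdsGT_of_mem (show (0:ℝ) ∈ Ico (0:ℝ) 1 by
      constructor <;> norm_num)] with y hy
    have hu : unifCDF (1 - y) = 1 - y := unifCDF_eq (by linarith [hy.2]) (by linarith [hy.1])
    have hy0 : y ≠ 0 := ne_of_gt hy.1
    rw [hGdef]
    simp only [hu]
    field_simp
    ring
  have := tendsto_nhds_unique htailG (hBtail G hGB)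
  have hne : (1:ℝ) - q ≠ 0 := ne_of_gt h1q
  have : p - q = 0 := by
    rcases mul_eq_zero.mp this with h | h
    · exact h
    · exact absurd (inv_eq_zero.mp h) hne
  linarith

/-- for a weakly closed class `B` of CDFs on [0,1] with thin tails at 1,
`(π, H) ↦ πx + (1-π)H(x)` is a homeomorphism from `(0,1) × B` onto its image:
it is injective, and (sequentially, for the weak topology) continuous with
continuous inverse. -/
theorem mixture_map_homeomorphism
    (B : Set (ℝ → ℝ))
    (hBcdf : ∀ H ∈ B, IsCDF01 H)
    (hBtail : ∀ H ∈ B,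
      Tendsto (fun y => (1 - H (1 - y)) / y) (nhdsWithin 0 (Ioi (0:ℝ))) (nhds 0))
    (hBclosed : ∀ (Hn : ℕ → ℝ → ℝ) (H : ℝ → ℝ), (∀ n, Hn n ∈ B) →
      IsCDF01 H → WeakConv Hn H → H ∈ B) :
    (∀ p ∈ Ioo (0:ℝ) 1, ∀ p' ∈ Ioo (0:ℝ) 1, ∀ H ∈ B, ∀ H' ∈ B,
      (∀ x, mix p H x = mix p' H' x) → p = p' ∧ ∀ x, H x = H' x) ∧
    (∀ (pn : ℕ → ℝ) (Hn : ℕ → ℝ → ℝ), (∀ n, pn n ∈ Ioo (0:ℝ) 1) →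
      (∀ n, Hn n ∈ B) → ∀ p ∈ Ioo (0:ℝ) 1, ∀ H ∈ B,
      ((Tendsto pn atTop (nhds p) ∧ WeakConv Hn H) ↔
        WeakConv (fun n => mix (pn n) (Hn n)) (mix p H))) := by
  constructor
  · -- injectivity
    intro p hp p' hp' H hH H' hH' heq
    have hpp' : p = p' := tail_identify (hBtail H hH) (hBtail H' hH') heq
    subst hpp'
    refine ⟨rfl, fun x => ?_⟩
    have := heq x
    have hne : (1:ℝ) - p ≠ 0 := by have := hp.2; intro h; linarith
    simp only [mix] at this
    have : (1 - p) * H x = (1 - p) * H' x := by linarith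
    exact mul_left_cancel₀ hne this
  · intro pn Hn hpn hHn p hp H hH
    have hne : (1:ℝ) - p ≠ 0 := by have := hp.2; intro h; linarith
    constructor
    · -- forward: continuity
      rintro ⟨hpt, hWH⟩ x hx
      have hxH : ContinuousAt H x := (continuousAt_mix_iff (ne_of_lt hp.2)).mp hx
      have h1 : Tendsto (fun n => pn n * unifCDF x + (1 - pn n) * Hn n x) atTop
          (nhds (p * unifCDF x + (1 - p) * H x)) :=
        (hpt.mul tendsto_const_nhds).add ((tendsto_const_nhds.sub hpt).mul (hWH x hxH))
      simpa only [mix] using h1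
    · -- reverse
      intro hW
      have hTend : Tendsto pn atTop (nhds p) := by
        apply tendsto_of_subseq_tendsto
        intro ns hns
        obtain ⟨q, hqmem, ms, hms, hconv⟩ :=
          (isCompact_Icc (a := (0:ℝ)) (b := 1)).tendsto_subseq
            (x := fun n => pn (ns n)) (fun n => ⟨(hpn _).1.le, (hpn _).2.le⟩)
        have hconv' : Tendsto (fun j => pn (ns (ms j))) atTop (nhds q) := hconv
        have hqp : q = p := subseq_limit_eq B hBcdf hBtail hBclosed pn Hn hpn hHn hp hH hW
          (ns ∘ ms) (hns.comp hms.tendsto_atTop) hconv'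
        exact ⟨ms, hqp ▸ hconv'⟩
      refine ⟨hTend, ?_⟩
      intro x hxH
      have hxF : ContinuousAt (mix p H) x := (continuousAt_mix_iff (ne_of_lt hp.2)).mpr hxH
      have hrepr : ∀ n, Hn n x =
          (mix (pn n) (Hn n) x - pn n * unifCDF x) / (1 - pn n) := by
        intro n
        have : (1:ℝ) - pn n ≠ 0 := by have := (hpn n).2; intro h; linarith
        field_simp [mix]
        simp only [mix]; ring
      have hlim : Tendsto (fun n => (mix (pn n) (Hn n) x - pn n * unifCDF x) / (1 - pn n))
          atTop (nhds ((mix p H x - p * unifCDF x) / (1 - p))) :=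
        ((hW x hxF).sub (hTend.mul tendsto_const_nhds)).div
          (tendsto_const_nhds.sub hTend) hne
      have hval : (mix p H x - p * unifCDF x) / (1 - p) = H x := by
        field_simp [mix]
        simp only [mix]; ring
      rw [hval] at hlim
      exact hlim.congr (fun n => (hrepr n).symm)
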